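/- Let n ≥ 1, let M be a real symmetric positive definite n×n matrix, let Ω ⊆ ℝⁿ be a bounded measurable set and let h : ℝⁿ → ℝ be integrable on Ω. Define u(x,t) = ∫_Ω Ψ_M(x,y,t)·h(y) dy for t > 0. Then for every point x ∈ ℝⁿ lying outside the closure of Ω, u(x,t) → 0 as t → 0⁺. -/

import Mathlib

open Matrix MeasureTheory Bornology Filter Topology

/-- The Gaussian kernel `Ψ_M(x,y,s)` associated with a positive definite matrix `M`. -/
noncomputable def gaussKernel (n : ℕ) (M : Matrix (Fin n) (Fin n) ℝ)
    (x y : Fin n → ℝ) (s : ℝ) : ℝ :=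
  (2 * Real.sqrt (Real.pi * M.det * s)) ^ (-(n : ℤ)) *
    Real.exp (-((x - y) ⬝ᵥ (M⁻¹).mulVec (x - y)) / (4 * s))

/-- the Poisson-type parabolic potential
`u(x,t) = ∫_Ω Ψ_M(x,y,t) h(y) dy` tends to `0` as `t → 0⁺` for every `x` outside the
closure of `Ω`. -/
theorem poisson_integral_tendsto_zero
    (n : ℕ) (hn : 1 ≤ n) (M : Matrix (Fin n) (Fin n) ℝ) (hM : M.PosDef)
    (Ω : Set (Fin n → ℝ)) (hΩmeas : MeasurableSet Ω) (hΩbd : IsBounded Ω)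
    (h : (Fin n → ℝ) → ℝ) (hh : IntegrableOn h Ω)
    (u : (Fin n → ℝ) → ℝ → ℝ)
    (hu : ∀ x t, u x t = ∫ y in Ω, gaussKernel n M x y t * h y) :
    ∀ x ∉ closure Ω, Tendsto (fun t => u x t) (𝓝[>] 0) (𝓝 0) := by
  intro x hx
  rcases Ω.eq_empty_or_nonempty with rfl | hne
  · simp only [hu, Measure.restrict_empty, integral_zero_measure]
    exact tendsto_const_nhds
  -- quadratic form f
  set f : (Fin n → ℝ) → ℝ := fun y => (x - y) ⬝ᵥ (M⁻¹).mulVec (x - y) with hf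
  have hfc : Continuous f := by
    have h1 : Continuous fun y : Fin n → ℝ => x - y := continuous_const.sub continuous_id
    exact h1.dotProduct (continuous_const.matrix_mulVec h1)
  have hK : IsCompact (closure Ω) := hΩbd.isCompact_closure
  obtain ⟨y₀, hy₀, hmin'⟩ := hK.exists_isMinOn hne.closure (hfc.continuousOn)
  have hmin : ∀ y ∈ closure Ω, f y₀ ≤ f y := fun y hy => hmin' hy
  set C := f y₀ with hC
  have hCpos : 0 < C := by
    have hv : x - y₀ ≠ 0 := by
      intro hv
      exact hx (by rwa [sub_eq_zero.mp hv])
    have := hM.inv.re_dotProduct_pos (x := x - y₀) hv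
    simpa [hC, hf] using this
  have hdet : 0 < M.det := hM.det_pos
  have hπd : 0 < Real.pi * M.det := mul_pos Real.pi_pos hdet
  set A := ∫ y in Ω, ‖h y‖ with hA
  set K : ℝ → ℝ := fun t =>
    (2 * Real.sqrt (Real.pi * M.det * t)) ^ (-(n : ℤ)) * Real.exp (-C / (4 * t)) with hKdef
  -- bound
  have hbound : ∀ t, 0 < t → ‖u x t‖ ≤ K t * A := by
    intro t ht
    rw [hu]
    calc ‖∫ y in Ω, gaussKernel n M x y t * h y‖
        ≤ ∫ y in Ω, ‖gaussKernel n M x y t * h y‖ := norm_integral_le_integral_norm _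
      _ ≤ ∫ y in Ω, K t * ‖h y‖ := by
          apply integral_mono_of_nonneg
          · exact Eventually.of_forall fun y => norm_nonneg _
          · exact (hh.norm).const_mul _
          · filter_upwards [ae_restrict_mem hΩmeas] with y hy
            rw [norm_mul]
            apply mul_le_mul_of_nonneg_right _ (norm_nonneg _)
            have hb : 0 < 2 * Real.sqrt (Real.pi * M.det * t) :=
              mul_pos two_pos (Real.sqrt_pos.mpr (mul_pos hπd ht))
            have hΨnonneg : 0 ≤ gaussKernel n M x y t :=
              mul_nonneg (zpow_nonneg hb.le _) (Real.exp_pos _).le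
            rw [Real.norm_of_nonneg hΨnonneg]
            unfold gaussKernel
            apply mul_le_mul_of_nonneg_left _ (zpow_nonneg hb.le _)
            apply Real.exp_le_exp.mpr
            have hfy : C ≤ f y := hmin y (subset_closure hy)
            have h4t : (0:ℝ) < 4 * t := by positivity
            have : -(f y) ≤ -C := neg_le_neg hfy
            exact div_le_div_of_nonneg_right this h4t.le |>.trans_eq rfl
      _ = K t * A := by rw [hA, integral_const_mul]
  -- K tends to 0
  have hKt : Tendsto K (𝓝[>] 0) (𝓝 0) := by
    set B : ℝ := (2 * Real.sqrt (Real.pi * M.det)) ^ (-(n : ℤ)) with hB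
    have hG : Tendsto (fun s : ℝ => B * (s ^ ((n : ℝ) / 2) * Real.exp (-(C / 4) * s)))
        atTop (𝓝 0) := by
      have := tendsto_rpow_mul_exp_neg_mul_atTop_nhds_zero ((n : ℝ) / 2) (C / 4)
        (by positivity)
      simpa using this.const_mul B
    have hcomp := hG.comp tendsto_inv_nhdsGT_zero
    apply hcomp.congr'
    filter_upwards [self_mem_nhdsWithin] with t (ht : t ∈ Set.Ioi 0)
    have ht0 : (0:ℝ) < t := ht
    show B * ((t⁻¹) ^ ((n : ℝ) / 2) * Real.exp (-(C / 4) * t⁻¹)) = K t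
    have h1 : Real.sqrt (Real.pi * M.det * t) = Real.sqrt (Real.pi * M.det) * Real.sqrt t :=
      Real.sqrt_mul hπd.le t
    have h2 : (2 * (Real.sqrt (Real.pi * M.det) * Real.sqrt t)) ^ (-(n : ℤ))
        = B * (Real.sqrt t) ^ (-(n : ℤ)) := by
      rw [hB, ← mul_assoc, mul_zpow]
    have h3 : (Real.sqrt t) ^ (-(n : ℤ)) = (t⁻¹) ^ ((n : ℝ) / 2) := by
      rw [Real.sqrt_eq_rpow, ← Real.rpow_intCast, ← Real.rpow_mul ht0.le,
        Real.inv_rpow ht0.le, ← Real.rpow_neg ht0.le]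
      push_cast
      ring_nf
    have h4 : Real.exp (-(C / 4) * t⁻¹) = Real.exp (-C / (4 * t)) := by
      congr 1; field_simp
    rw [hKdef]
    simp only [h1, h2, h3, h4]
    ring
  have := hKt.mul_const A
  rw [zero_mul] at this
  have hev : ∀ᶠ t in 𝓝[>] (0:ℝ), ‖u x t‖ ≤ K t * A := by
    filter_upwards [self_mem_nhdsWithin] with t ht
    exact hbound t ht
  exact squeeze_zero_norm' hev this
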